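/- Let a_0 < a_1 < ⋯ < a_n be real numbers, let c_{a_0}, …, c_{a_n} > 0, l > 0, and weights ω_{a_0}, …, ω_{a_n} > 0. Then the rational GT-Bernstein basis {𝒯_{a_0}, …, 𝒯_{a_n}} is a normalized totally positive basis on [a_0, a_n]; that is: (i) 𝒯_{a_i}(t) ≥ 0 for every t ∈ [a_0, a_n] and every i; (ii) Σ_{i=0}^{n} 𝒯_{a_i}(t) = 1 for every t ∈ [a_0, a_n]; and (iii) for every strictly increasing sequence a_0 ≤ t_0 < t_1 < ⋯ < t_n ≤ a_n, the collocation matrix [𝒯_{a_j}(t_i)]_{i,j=0}^{n} is a totally positive matrix. -/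

import Mathlib

/-- A real matrix is totally positive if every minor (determinant of the submatrix
obtained by selecting rows `r 0 < r 1 < ⋯` and columns `c 0 < c 1 < ⋯`) is
nonnegative. -/
def IsTotallyPositive {N M : ℕ} (A : Matrix (Fin N) (Fin M) ℝ) : Prop :=
  ∀ (k : ℕ) (r : Fin k → Fin N) (c : Fin k → Fin M),
    StrictMono r → StrictMono c → 0 ≤ (A.submatrix r c).det

/-- The GT-Bernstein basis functions
`β_{a_i}(t) = c_{a_i} (l(t − a_0))^{l(a_i − a_0)} (l(a_n − t))^{l(a_n − a_i)}`,
where powers are real powers (`Real.rpow`, which satisfies `0 ^ 0 = 1`). -/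
noncomputable def gtBernstein (n : ℕ) (a c : Fin (n + 1) → ℝ) (l : ℝ)
    (i : Fin (n + 1)) (t : ℝ) : ℝ :=
  c i * (l * (t - a 0)) ^ (l * (a i - a 0)) *
    (l * (a (Fin.last n) - t)) ^ (l * (a (Fin.last n) - a i))

/-- The rational GT-Bernstein basis functions
`𝒯_{a_i}(t) = ω_{a_i} β_{a_i}(t) / Σ_j ω_{a_j} β_{a_j}(t)`. -/
noncomputable def ratGTBernstein (n : ℕ) (a c : Fin (n + 1) → ℝ) (l : ℝ)
    (ω : Fin (n + 1) → ℝ) (i : Fin (n + 1)) (t : ℝ) : ℝ :=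
  ω i * gtBernstein n a c l i t / ∑ j, ω j * gtBernstein n a c l j t

open Real Finset

/-- A linear combination of `k` power functions with strictly increasing real
exponents that vanishes at `k` distinct positive points is trivial. -/
lemma rpow_comb_zeros : ∀ (k : ℕ) (e c : Fin k → ℝ), StrictMono e →
    ∀ x : Fin k → ℝ, StrictMono x → (∀ i, 0 < x i) →
    (∀ i, ∑ j, c j * x i ^ e j = 0) → c = 0 := by
  intro k
  induction k with
  | zero => intro e c _ x _ _ _; funext i; exact absurd i.2 (by omega)
  | succ m ih =>
    intro e c he x hx hx0 hz
    -- the auxiliary function g y = ∑ c j * y ^ (e j - e 0)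
    set g : ℝ → ℝ := fun y => ∑ j, c j * y ^ (e j - e 0) with hg
    have hgz : ∀ i, g (x i) = 0 := by
      intro i
      have h1 : x i ^ (e 0) * g (x i) = 0 := by
        rw [hg]
        simp only [Finset.mul_sum]
        rw [← hz i]
        refine Finset.sum_congr rfl fun j _ => ?_
        rw [show (x i) ^ (e 0) * (c j * x i ^ (e j - e 0))
            = c j * ((x i) ^ (e 0) * x i ^ (e j - e 0)) by ring,
          ← Real.rpow_add (hx0 i)]
        ring_nf
      rcases mul_eq_zero.1 h1 with h | h
      · exact absurd h (ne_of_gt (Real.rpow_pos_of_pos (hx0 i) _))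
      · exact h
    -- derivative of g at positive points
    have hderiv : ∀ y : ℝ, 0 < y →
        HasDerivAt g (∑ j, c j * ((e j - e 0) * y ^ (e j - e 0 - 1))) y := by
      intro y hy
      apply HasDerivAt.fun_sum
      intro j _
      exact (Real.hasDerivAt_rpow_const (Or.inl (ne_of_gt hy))).const_mul (c j)
    -- Rolle points
    have hroll : ∀ i : Fin m, ∃ y ∈ Set.Ioo (x i.castSucc) (x i.succ),
        ∑ j, c j * ((e j - e 0) * y ^ (e j - e 0 - 1)) = 0 := by
      intro i
      have hlt : x i.castSucc < x i.succ := hx Fin.castSucc_lt_succ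
      refine exists_hasDerivAt_eq_zero (f := g) hlt ?_ (by rw [hgz, hgz]) ?_
      · intro y hy
        have hy0 : 0 < y := lt_of_lt_of_le (hx0 _) hy.1
        exact ((hderiv y hy0).continuousAt).continuousWithinAt
      · intro y hy
        exact hderiv y (lt_trans (hx0 _) hy.1)
    choose y hy hy0 using hroll
    have hymem : ∀ i, 0 < y i := fun i => lt_trans (hx0 _) (hy i).1
    have hymono : StrictMono y := by
      intro i j hij
      calc y i < x i.succ := (hy i).2
        _ ≤ x j.castSucc := hx.monotone (Fin.succ_le_castSucc_iff.2 hij)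
        _ < y j := (hy j).1
    have he' : StrictMono (fun j : Fin m => e j.succ - e 0 - 1) := by
      intro i j hij
      have := he (Fin.succ_lt_succ_iff.2 hij)
      simpa using this
    have key : (fun j : Fin m => c j.succ * (e j.succ - e 0)) = 0 := by
      apply ih _ _ he' y hymono hymem
      intro i
      have := hy0 i
      rw [Fin.sum_univ_succ] at this
      simpa [mul_assoc] using this
    have hcs : ∀ j : Fin m, c j.succ = 0 := by
      intro j
      have h1 := congrFun key j
      have h2 : e 0 < e j.succ := he (Fin.succ_pos j)
      simp only [Pi.zero_apply, mul_eq_zero] at h1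
      rcases h1 with h | h
      · exact h
      · linarith
    have hc0 : c 0 = 0 := by
      have := hz 0
      rw [Fin.sum_univ_succ] at this
      simp only [hcs, zero_mul, Finset.sum_const_zero, add_zero] at this
      rcases mul_eq_zero.1 this with h | h
      · exact h
      · exact absurd h (ne_of_gt (Real.rpow_pos_of_pos (hx0 0) _))
    funext i
    refine Fin.cases ?_ ?_ i
    · exact hc0
    · exact hcs

lemma genVandermonde_det_ne_zero {k : ℕ} {e x : Fin k → ℝ} (he : StrictMono e)
    (hx : StrictMono x) (hx0 : ∀ i, 0 < x i) :
    (Matrix.of fun i j => x i ^ e j).det ≠ 0 := by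
  intro hdet
  obtain ⟨v, hv, hmv⟩ := Matrix.exists_mulVec_eq_zero_iff.2 hdet
  apply hv
  apply rpow_comb_zeros k e v he x hx hx0
  intro i
  have := congrFun hmv i
  simpa [Matrix.mulVec, dotProduct, mul_comm] using this

lemma genVandermonde_det_pos {k : ℕ} {e x : Fin k → ℝ} (he : StrictMono e)
    (hx : StrictMono x) (hx0 : ∀ i, 0 < x i) :
    0 < (Matrix.of fun i j => x i ^ e j).det := by
  set f : ℝ → ℝ := fun s =>
    (Matrix.of fun i j : Fin k => x i ^ ((1 - s) * e j + s * (j : ℝ))).det with hf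
  have hcont : Continuous f := by
    apply Continuous.matrix_det
    apply continuous_matrix
    intro i j
    simp only [Matrix.of_apply]
    have : (fun s => x i ^ ((1 - s) * e j + s * (j : ℝ)))
        = fun s => Real.exp (Real.log (x i) * ((1 - s) * e j + s * (j : ℝ))) := by
      funext s; rw [Real.rpow_def_of_pos (hx0 i)]
    rw [this]
    fun_prop
  have hne : ∀ s ∈ Set.Icc (0:ℝ) 1, f s ≠ 0 := by
    intro s hs
    apply genVandermonde_det_ne_zero _ hx hx0
    intro i j hij
    dsimp only
    have h1 : (1 - s) * e i ≤ (1 - s) * e j :=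
      mul_le_mul_of_nonneg_left (le_of_lt (he hij)) (by linarith [hs.2])
    have h2 : s * (i : ℝ) ≤ s * (j : ℝ) := by
      have : (i : ℝ) ≤ (j : ℝ) := by exact_mod_cast le_of_lt hij
      exact mul_le_mul_of_nonneg_left this hs.1
    rcases lt_or_eq_of_le hs.1 with h0 | h0
    · have : s * (i : ℝ) < s * (j : ℝ) := by
        have : (i : ℝ) < (j : ℝ) := by exact_mod_cast hij
        exact mul_lt_mul_of_pos_left this h0
      linarith
    · have h3 : (1 - s) * e i < (1 - s) * e j := by
        rw [← h0]; simpa using he hij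
      linarith
  have hf1 : 0 < f 1 := by
    have hm : (Matrix.of fun (i j : Fin k) => x i ^ ((1 - (1:ℝ)) * e j + 1 * (j : ℝ)))
        = Matrix.vandermonde x := by
      ext i j
      simp [Matrix.vandermonde, ← Real.rpow_natCast]
    have : f 1 = (Matrix.vandermonde x).det := by
      simp only [hf]
      rw [hm]
    rw [this, Matrix.det_vandermonde]
    apply Finset.prod_pos
    intro i _
    apply Finset.prod_pos
    intro j hj
    have : i < j := Finset.mem_Ioi.1 hj
    linarith [hx this]
  have hf0 : 0 < f 0 := by
    rcases lt_trichotomy (f 0) 0 with h | h | h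
    · exfalso
      have : (0:ℝ) ∈ Set.Icc (f 0) (f 1) := ⟨le_of_lt h, le_of_lt hf1⟩
      obtain ⟨s, hs, hfs⟩ := intermediate_value_Icc (by norm_num : (0:ℝ) ≤ 1)
        hcont.continuousOn this
      exact hne s hs hfs
    · exact absurd h (hne 0 (by norm_num))
    · exact h
  have : f 0 = (Matrix.of fun i j : Fin k => x i ^ e j).det := by
    simp only [hf]; norm_num
  linarith [this ▸ hf0]

/-- Expansion when row 0 lives only in column 0. -/
lemma det_row_zero_single {m : ℕ} (M : Matrix (Fin (m + 1)) (Fin (m + 1)) ℝ)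
    (h : ∀ j, j ≠ 0 → M 0 j = 0) :
    M.det = M 0 0 * (M.submatrix Fin.succ Fin.succ).det := by
  rw [Matrix.det_succ_row_zero]
  rw [Fin.sum_univ_succ]
  have h0 : ∀ j : Fin m, (-1 : ℝ) ^ ((j.succ : Fin (m+1)) : ℕ) * M 0 j.succ *
      (M.submatrix Fin.succ (Fin.succAbove j.succ)).det = 0 := by
    intro j
    rw [h j.succ (Fin.succ_ne_zero j)]
    ring
  simp only [h0, Finset.sum_const_zero, add_zero]
  have : (Fin.succAbove (0 : Fin (m+1))) = Fin.succ := by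
    funext i; exact Fin.zero_succAbove i
  rw [this]
  norm_num

/-- Expansion when the last row lives only in the last column. -/
lemma det_row_last_single {m : ℕ} (M : Matrix (Fin (m + 1)) (Fin (m + 1)) ℝ)
    (h : ∀ j, j ≠ Fin.last m → M (Fin.last m) j = 0) :
    M.det = M (Fin.last m) (Fin.last m) *
      (M.submatrix Fin.castSucc Fin.castSucc).det := by
  have hrev : (M.submatrix (Fin.rev) (Fin.rev)).det = M.det :=
    Matrix.det_submatrix_equiv_self (Fin.revPerm) M
  rw [← hrev]
  rw [det_row_zero_single (M.submatrix Fin.rev Fin.rev) ?h2]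
  case h2 =>
    intro j hj
    simp only [Matrix.submatrix_apply]
    rw [show Fin.rev (0 : Fin (m+1)) = Fin.last m by simp [Fin.rev_eq_iff]]
    apply h
    intro hc
    apply hj
    have : Fin.rev j = Fin.rev (0 : Fin (m+1)) := by
      rw [hc]; simp [Fin.rev_eq_iff]
    exact Fin.rev_injective this
  have e1 : (M.submatrix Fin.rev Fin.rev) 0 0 = M (Fin.last m) (Fin.last m) := by
    simp only [Matrix.submatrix_apply]
    rw [show Fin.rev (0 : Fin (m+1)) = Fin.last m by simp [Fin.rev_eq_iff]]
  rw [e1]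
  congr 1
  have e2 : ((M.submatrix Fin.rev Fin.rev).submatrix Fin.succ Fin.succ)
      = (M.submatrix Fin.castSucc Fin.castSucc).submatrix Fin.rev Fin.rev := by
    ext i j
    simp only [Matrix.submatrix_apply, Matrix.submatrix_submatrix, Function.comp]
    rw [Fin.rev_succ, Fin.rev_succ]
  rw [e2]
  exact Matrix.det_submatrix_equiv_self (Fin.revPerm) _

/-- Interior case: all evaluation points strictly inside `(α, β)`. -/
lemma gt_block_det_pos_interior {k : ℕ} {α β l E : ℝ} {κ e τ : Fin k → ℝ}
    (hαβ : α < β) (hl : 0 < l) (hκ : ∀ j, 0 < κ j) (he : StrictMono e)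
    (hτ : StrictMono τ) (hτm : ∀ i, τ i ∈ Set.Ioo α β) :
    0 < (Matrix.of fun i j =>
      κ j * (l * (τ i - α)) ^ (e j) * (l * (β - τ i)) ^ (E - e j)).det := by
  set x : Fin k → ℝ := fun i => (τ i - α) / (β - τ i) with hx
  have hA : ∀ i, 0 < τ i - α := fun i => by linarith [(hτm i).1]
  have hB : ∀ i, 0 < β - τ i := fun i => by linarith [(hτm i).2]
  have hx0 : ∀ i, 0 < x i := fun i => div_pos (hA i) (hB i)
  have hxm : StrictMono x := by
    intro i j hij
    have h1 := hτ hij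
    rw [hx]
    dsimp only
    rw [div_lt_div_iff₀ (hB i) (hB j)]
    nlinarith [(hτm i).1, (hτm j).2]
  have hentry : ∀ i j, κ j * (l * (τ i - α)) ^ (e j) * (l * (β - τ i)) ^ (E - e j)
      = κ j * ((l * (β - τ i)) ^ E * x i ^ e j) := by
    intro i j
    have hlA : (0:ℝ) < l * (τ i - α) := mul_pos hl (hA i)
    have hlB : (0:ℝ) < l * (β - τ i) := mul_pos hl (hB i)
    rw [Real.rpow_sub hlB]
    rw [hx]
    dsimp only
    rw [show (τ i - α) / (β - τ i) = (l * (τ i - α)) / (l * (β - τ i)) by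
      rw [mul_div_mul_left _ _ (ne_of_gt hl)]]
    rw [Real.div_rpow (le_of_lt hlA) (le_of_lt hlB)]
    field_simp
  have hM : (Matrix.of fun i j =>
        κ j * (l * (τ i - α)) ^ (e j) * (l * (β - τ i)) ^ (E - e j))
      = Matrix.of fun i j => κ j * ((l * (β - τ i)) ^ E * (Matrix.of
          fun i j => x i ^ e j) i j) := by
    ext i j
    simpa using hentry i j
  rw [hM]
  erw [Matrix.det_mul_row]
  have : (Matrix.of fun i j : Fin k =>
        (l * (β - τ i)) ^ E * (Matrix.of fun i j => x i ^ e j) i j).det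
      = (∏ i, (l * (β - τ i)) ^ E) * (Matrix.of fun i j => x i ^ e j).det :=
    Matrix.det_mul_column _ _
  rw [show (Matrix.det fun i j : Fin k =>
      (l * (β - τ i)) ^ E * (Matrix.of fun i j => x i ^ e j) i j)
    = (Matrix.of fun i j : Fin k =>
      (l * (β - τ i)) ^ E * (Matrix.of fun i j => x i ^ e j) i j).det from rfl, this]
  have h1 : 0 < ∏ j, κ j := Finset.prod_pos fun j _ => hκ j
  have h2 : 0 < ∏ i, (l * (β - τ i)) ^ E :=
    Finset.prod_pos fun i _ => Real.rpow_pos_of_pos (mul_pos hl (hB i)) _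
  have h3 := genVandermonde_det_pos he hxm hx0
  positivity

/-- Main block lemma: determinants of GT-Bernstein-type collocation blocks
are nonnegative. -/
lemma gt_block_det_nonneg (α β l E : ℝ) (hαβ : α ≤ β) (hl : 0 < l) :
    ∀ (k : ℕ) (κ e τ : Fin k → ℝ), (∀ j, 0 < κ j) → StrictMono e →
    (∀ j, 0 ≤ e j) → (∀ j, e j ≤ E) → StrictMono τ →
    (∀ i, τ i ∈ Set.Icc α β) →
    0 ≤ (Matrix.of fun i j =>
      κ j * (l * (τ i - α)) ^ (e j) * (l * (β - τ i)) ^ (E - e j)).det := by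
  rcases hαβ.eq_or_lt with heq | hlt
  · -- degenerate interval: α = β
    subst heq
    intro k κ e τ hκ he he0 heE hτ hτm
    match k with
    | 0 => simp [Matrix.det_fin_zero]
    | 1 =>
      rw [Matrix.det_fin_one]
      simp only [Matrix.of_apply]
      have h1 : 0 ≤ l * (τ 0 - α) := by
        have := (hτm 0).1; nlinarith
      have h2 : 0 ≤ l * (α - τ 0) := by
        have := (hτm 0).2; nlinarith
      have := hκ 0
      positivity
    | (m + 2) =>
      exfalso
      have h01 : τ 0 < τ 1 := hτ (by rw [Fin.lt_def]; simp)
      have := (hτm 0).1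
      have := (hτm 0).2
      have := (hτm 1).1
      have := (hτm 1).2
      linarith
  · -- nondegenerate interval: α < β
    intro k
    induction k with
    | zero => intro κ e τ _ _ _ _ _ _; simp [Matrix.det_fin_zero]
    | succ m ih =>
      intro κ e τ hκ he he0 heE hτ hτm
      by_cases h0 : τ 0 = α
      · -- left endpoint is an evaluation point
        by_cases he00 : e 0 = 0
        · -- expand along the first row
          rw [det_row_zero_single _ ?hrow]
          case hrow =>
            intro j hj
            simp only [Matrix.of_apply, h0]
            have hej : 0 < e j := by
              have : e 0 < e j := he (Fin.pos_of_ne_zero hj)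
              linarith [he0 0]
            rw [show l * (α - α) = 0 by ring, Real.zero_rpow (ne_of_gt hej)]
            ring
          have hsub : ((Matrix.of fun i j =>
              κ j * (l * (τ i - α)) ^ (e j) * (l * (β - τ i)) ^ (E - e j)).submatrix
                Fin.succ Fin.succ)
              = Matrix.of fun i j => (κ ∘ Fin.succ) j *
                (l * ((τ ∘ Fin.succ) i - α)) ^ ((e ∘ Fin.succ) j) *
                (l * (β - (τ ∘ Fin.succ) i)) ^ (E - (e ∘ Fin.succ) j) := by
            ext i j; simp [Matrix.submatrix_apply]
          rw [hsub]
          have hd := ih (κ ∘ Fin.succ) (e ∘ Fin.succ) (τ ∘ Fin.succ)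
            (fun j => hκ _) (he.comp Fin.strictMono_succ) (fun j => he0 _)
            (fun j => heE _) (hτ.comp Fin.strictMono_succ) (fun i => hτm _)
          have hM00 : (0:ℝ) ≤ (Matrix.of fun i j =>
              κ j * (l * (τ i - α)) ^ (e j) * (l * (β - τ i)) ^ (E - e j)) 0 0 := by
            simp only [Matrix.of_apply, h0, he00]
            have h1 : (0:ℝ) ≤ l * (α - α) := by nlinarith
            have h2 : (0:ℝ) ≤ l * (β - α) := by nlinarith
            have := hκ 0
            positivity
          exact mul_nonneg hM00 hd
        · -- first exponent positive: the whole first row vanishes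
          rw [Matrix.det_eq_zero_of_row_eq_zero 0 ?_]
          intro j
          simp only [Matrix.of_apply, h0]
          have hej : 0 < e j := by
            rcases eq_or_ne j 0 with rfl | hj
            · exact lt_of_le_of_ne (he0 0) (Ne.symm he00)
            · have : e 0 < e j := he (Fin.pos_of_ne_zero hj)
              linarith [he0 0]
          rw [show l * (α - α) = 0 by ring, Real.zero_rpow (ne_of_gt hej)]
          ring
      · -- all points are strictly above α
        have hgt : ∀ i, α < τ i := by
          intro i
          have h1 : τ 0 ≤ τ i := hτ.monotone (Fin.zero_le i)
          have h2 : α ≤ τ 0 := (hτm 0).1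
          rcases h2.eq_or_lt with h | h
          · exact absurd h.symm h0
          · linarith
        by_cases hlast : τ (Fin.last m) = β
        · by_cases helE : e (Fin.last m) = E
          · -- expand along last row
            rw [det_row_last_single _ ?hrow]
            case hrow =>
              intro j hj
              simp only [Matrix.of_apply, hlast]
              have hej : e j < E := by
                have : e j < e (Fin.last m) :=
                  he (lt_of_le_of_ne (Fin.le_last j) hj)
                linarith
              rw [show l * (β - β) = 0 by ring,
                Real.zero_rpow (by intro h; linarith : E - e j ≠ 0)]
              ring
            have hsub : ((Matrix.of fun i j =>
                κ j * (l * (τ i - α)) ^ (e j) * (l * (β - τ i)) ^ (E - e j)).submatrix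
                  Fin.castSucc Fin.castSucc)
                = Matrix.of fun i j => (κ ∘ Fin.castSucc) j *
                  (l * ((τ ∘ Fin.castSucc) i - α)) ^ ((e ∘ Fin.castSucc) j) *
                  (l * (β - (τ ∘ Fin.castSucc) i)) ^ (E - (e ∘ Fin.castSucc) j) := by
              ext i j; simp [Matrix.submatrix_apply]
            rw [hsub]
            have hd := ih (κ ∘ Fin.castSucc) (e ∘ Fin.castSucc) (τ ∘ Fin.castSucc)
              (fun j => hκ _) (he.comp Fin.strictMono_castSucc) (fun j => he0 _)
              (fun j => heE _) (hτ.comp Fin.strictMono_castSucc) (fun i => hτm _)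
            have hMll : (0:ℝ) ≤ (Matrix.of fun i j =>
                κ j * (l * (τ i - α)) ^ (e j) * (l * (β - τ i)) ^ (E - e j))
                  (Fin.last m) (Fin.last m) := by
              simp only [Matrix.of_apply, hlast]
              have h1 : (0:ℝ) ≤ l * (β - α) := by nlinarith
              have h2 : (0:ℝ) ≤ l * (β - β) := by nlinarith
              have := hκ (Fin.last m)
              positivity
            exact mul_nonneg hMll hd
          · -- last exponent below E: the whole last row vanishes
            rw [Matrix.det_eq_zero_of_row_eq_zero (Fin.last m) ?_]
            intro j
            simp only [Matrix.of_apply, hlast]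
            have hej : e j < E := by
              have h1 : e j ≤ e (Fin.last m) := he.monotone (Fin.le_last j)
              have h2 : e (Fin.last m) < E :=
                lt_of_le_of_ne (heE (Fin.last m)) helE
              linarith
            rw [show l * (β - β) = 0 by ring,
              Real.zero_rpow (by intro h; linarith : E - e j ≠ 0)]
            ring
        · -- all points interior
          have hlt' : ∀ i, τ i < β := by
            intro i
            have h1 : τ i ≤ τ (Fin.last m) := hτ.monotone (Fin.le_last i)
            have h2 : τ (Fin.last m) ≤ β := (hτm (Fin.last m)).2
            rcases h2.eq_or_lt with h | h
            · exact absurd h hlast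
            · linarith
          exact le_of_lt (gt_block_det_pos_interior hlt hl hκ he hτ
            (fun i => ⟨hgt i, hlt' i⟩))

/-- For strictly increasing nodes `a 0 < a 1 < ⋯ < a n`, coefficients
`c i > 0`, `l > 0` and weights `ω i > 0`, the rational GT-Bernstein basis is a
normalized totally positive basis on `[a 0, a n]`: (i) each `𝒯_{a_i}` is nonnegative
on `[a 0, a n]`; (ii) the basis sums to `1` at every point of `[a 0, a n]`; and
(iii) every collocation matrix at a strictly increasing sequence
`a 0 ≤ t 0 < t 1 < ⋯ < t n ≤ a n` is totally positive. -/
theorem ratGTBernstein_is_NTP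
    (n : ℕ) (a c : Fin (n + 1) → ℝ) (l : ℝ) (ω : Fin (n + 1) → ℝ)
    (ha : StrictMono a) (hc : ∀ i, 0 < c i) (hl : 0 < l) (hω : ∀ i, 0 < ω i) :
    (∀ t ∈ Set.Icc (a 0) (a (Fin.last n)), ∀ i : Fin (n + 1),
        0 ≤ ratGTBernstein n a c l ω i t) ∧
      (∀ t ∈ Set.Icc (a 0) (a (Fin.last n)),
        ∑ i, ratGTBernstein n a c l ω i t = 1) ∧
      (∀ t : Fin (n + 1) → ℝ, StrictMono t →
        a 0 ≤ t 0 → t (Fin.last n) ≤ a (Fin.last n) →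
        IsTotallyPositive
          (Matrix.of fun i j : Fin (n + 1) => ratGTBernstein n a c l ω j (t i))) := by
  have ha0l : a 0 ≤ a (Fin.last n) := ha.monotone (Fin.zero_le _)
  -- nonnegativity of the gtBernstein functions on the interval
  have hβ : ∀ u ∈ Set.Icc (a 0) (a (Fin.last n)), ∀ i,
      0 ≤ gtBernstein n a c l i u := by
    intro u hu i
    unfold gtBernstein
    have h1 : 0 ≤ l * (u - a 0) := by have := hu.1; nlinarith
    have h2 : 0 ≤ l * (a (Fin.last n) - u) := by have := hu.2; nlinarith
    have := hc i
    positivity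
  -- positivity of the denominator
  have hS : ∀ u ∈ Set.Icc (a 0) (a (Fin.last n)),
      0 < ∑ j, ω j * gtBernstein n a c l j u := by
    intro u hu
    apply Finset.sum_pos'
    · intro j _
      exact mul_nonneg (le_of_lt (hω j)) (hβ u hu j)
    · rcases hu.2.eq_or_lt with heq | hlt
      · refine ⟨Fin.last n, Finset.mem_univ _, ?_⟩
        apply mul_pos (hω _)
        unfold gtBernstein
        rw [heq]
        rw [show l * (a (Fin.last n) - a (Fin.last n)) = 0 by ring, Real.rpow_zero,
          mul_one]
        rcases ha0l.eq_or_lt with h | h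
        · rw [show l * (a (Fin.last n) - a 0) = 0 by rw [← h]; ring, Real.rpow_zero,
            mul_one]
          exact hc _
        · exact mul_pos (hc _) (Real.rpow_pos_of_pos (by nlinarith) _)
      · refine ⟨0, Finset.mem_univ _, ?_⟩
        apply mul_pos (hω _)
        unfold gtBernstein
        rw [show l * (a 0 - a 0) = 0 by ring, Real.rpow_zero, mul_one]
        exact mul_pos (hc _) (Real.rpow_pos_of_pos (by nlinarith) _)
  refine ⟨?_, ?_, ?_⟩
  · -- (i) nonnegativity
    intro u hu i
    unfold ratGTBernstein
    exact div_nonneg (mul_nonneg (le_of_lt (hω i)) (hβ u hu i)) (le_of_lt (hS u hu))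
  · -- (ii) partition of unity
    intro u hu
    unfold ratGTBernstein
    rw [← Finset.sum_div, div_self (ne_of_gt (hS u hu))]
  · -- (iii) total positivity of collocation matrices
    intro t htm ht0 htl
    intro k r s hr hs
    have hτm : ∀ i : Fin k, t (r i) ∈ Set.Icc (a 0) (a (Fin.last n)) := by
      intro i
      constructor
      · exact le_trans ht0 (htm.monotone (Fin.zero_le _))
      · exact le_trans (htm.monotone (Fin.le_last _)) htl
    set τ : Fin k → ℝ := fun i => t (r i) with hτdef
    have hM : ((Matrix.of fun i j : Fin (n+1) =>
          ratGTBernstein n a c l ω j (t i)).submatrix r s)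
        = Matrix.of (fun i j : Fin k =>
            (∑ j', ω j' * gtBernstein n a c l j' (τ i))⁻¹ *
            ((Matrix.of fun i j : Fin k => ω (s j) *
              ((Matrix.of fun i j : Fin k =>
                gtBernstein n a c l (s j) (τ i)) i j)) i j)) := by
      ext i j
      simp only [Matrix.submatrix_apply, Matrix.of_apply]
      unfold ratGTBernstein
      rw [div_eq_mul_inv]
      ring
    rw [hM, Matrix.det_mul_column, Matrix.det_mul_row]
    have hN : (Matrix.of fun i j : Fin k => gtBernstein n a c l (s j) (τ i))
        = Matrix.of (fun i j : Fin k =>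
            (fun j' : Fin k => c (s j')) j *
            (l * (τ i - a 0)) ^ ((fun j' : Fin k => l * (a (s j') - a 0)) j) *
            (l * (a (Fin.last n) - τ i)) ^
              ((l * (a (Fin.last n) - a 0)) -
                (fun j' : Fin k => l * (a (s j') - a 0)) j)) := by
      ext i j
      simp only [Matrix.of_apply]
      unfold gtBernstein
      rw [show l * (a (Fin.last n) - a 0) - l * (a (s j) - a 0)
          = l * (a (Fin.last n) - a (s j)) by ring]
    rw [hN]
    have hdet := gt_block_det_nonneg (a 0) (a (Fin.last n)) l
      (l * (a (Fin.last n) - a 0)) ha0l hl k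
      (fun j' => c (s j')) (fun j' => l * (a (s j') - a 0)) τ
      (fun j' => hc _)
      (by
        intro i j hij
        have := ha (hs hij)
        dsimp only
        nlinarith)
      (by
        intro j'
        have : a 0 ≤ a (s j') := ha.monotone (Fin.zero_le _)
        nlinarith)
      (by
        intro j'
        have : a (s j') ≤ a (Fin.last n) := ha.monotone (Fin.le_last _)
        nlinarith)
      (htm.comp hr)
      (fun i => hτm i)
    have h1 : (0:ℝ) ≤ ∏ i, (∑ j', ω j' * gtBernstein n a c l j' (τ i))⁻¹ :=
      Finset.prod_nonneg fun i _ => inv_nonneg.2 (le_of_lt (hS _ (hτm i)))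
    have h2 : (0:ℝ) ≤ ∏ j, ω (s j) :=
      Finset.prod_nonneg fun j _ => le_of_lt (hω _)
    exact mul_nonneg h1 (mul_nonneg h2 hdet)
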